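/- arXiv:2302.10926 — 2 statements merged into one kernel-verified Lean document; each statement's English description precedes it below -/
import Mathlib

section
/- If G is a finite connected unicyclic simple graph of order n (so G has exactly n edges) such that EC(G) = n (equivalently, the singleton partition of the edge set of G is an ec-partition), then every path in G has length at most 5. -/
open SimpleGraph

/-- Two edges (as unordered pairs of vertices) share an endpoint. -/
def SharesEndpoint {V : Type*} (e f : Sym2 V) : Prop := ∃ v, v ∈ e ∧ v ∈ f

/-- `D` is an edge dominating set of `G`: `D` consists of edges of `G` and every
edge of `G` outside `D` shares an endpoint with some edge of `D`. -/
def IsEdgeDominating {V : Type*} (G : SimpleGraph V) (D : Set (Sym2 V)) : Prop :=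
  D ⊆ G.edgeSet ∧ ∀ e ∈ G.edgeSet \ D, ∃ f ∈ D, SharesEndpoint e f

/-- Two disjoint edge sets form an edge coalition: neither is an edge dominating
set but their union is. -/
def IsEdgeCoalition {V : Type*} (G : SimpleGraph V) (E₁ E₂ : Set (Sym2 V)) : Prop :=
  Disjoint E₁ E₂ ∧ ¬ IsEdgeDominating G E₁ ∧ ¬ IsEdgeDominating G E₂ ∧
    IsEdgeDominating G (E₁ ∪ E₂)

/-- An ec-partition of `G`: a partition of the edge set of `G` (into nonempty,
pairwise disjoint parts) such that every part either is a singleton edge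
dominating set, or is not an edge dominating set but forms an edge coalition
with another part. -/
def IsECPartition {V : Type*} (G : SimpleGraph V) (P : Set (Set (Sym2 V))) : Prop :=
  (∀ A ∈ P, A.Nonempty) ∧
  P.Pairwise Disjoint ∧
  ⋃₀ P = G.edgeSet ∧
  ∀ A ∈ P, ((∃ e, A = {e}) ∧ IsEdgeDominating G A) ∨
    (¬ IsEdgeDominating G A ∧ ∃ B ∈ P, B ≠ A ∧ IsEdgeCoalition G A B)

/-- The edge coalition number `EC(G)`: the maximum number of parts over all
ec-partitions of `G`. -/
noncomputable def edgeCoalitionNumber {V : Type*} (G : SimpleGraph V) : ℕ :=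
  sSup {k | ∃ P, IsECPartition G P ∧ P.ncard = k}



lemma getVert_inj_of_isPath {V : Type*} {G : SimpleGraph V} {u v : V} (p : G.Walk u v)
    (hp : p.IsPath) : ∀ i j, i ≤ p.length → j ≤ p.length → p.getVert i = p.getVert j → i = j := by
  induction p with
  | nil => intro i j hi hj _; simp only [Walk.length_nil, Nat.le_zero] at hi hj; omega
  | cons h q ih =>
    rw [Walk.cons_isPath_iff] at hp
    intro i j hi hj hij
    match i, j with
    | 0, 0 => rfl
    | 0, (k+1) =>
      exfalso
      apply hp.2
      rw [Walk.mem_support_iff_exists_getVert]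
      refine ⟨k, ?_, ?_⟩
      · rw [← Walk.getVert_cons_succ q h, ← hij, Walk.getVert_zero]
      · simpa using hj
    | (k+1), 0 =>
      exfalso
      apply hp.2
      rw [Walk.mem_support_iff_exists_getVert]
      refine ⟨k, ?_, ?_⟩
      · rw [← Walk.getVert_cons_succ q h, hij, Walk.getVert_zero]
      · simpa using hi
    | (k+1), (l+1) =>
      have := ih hp.1 k l (by simpa using hi) (by simpa using hj)
        (by rwa [Walk.getVert_cons_succ, Walk.getVert_cons_succ] at hij)
      omega

lemma conn_card_le {V : Type*} [Fintype V] (G : SimpleGraph V) (h : G.Connected) :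
    Fintype.card V ≤ G.edgeSet.ncard + 1 := by
  classical
  have hne : Nonempty V := h.nonempty
  obtain ⟨r⟩ := hne
  -- for each v, a geodesic walk to r
  have hwalk : ∀ v : V, ∃ w : G.Walk v r, w.length = G.dist v r :=
    fun v => (h.preconnected v r).exists_walk_length_eq_dist
  choose w hw using hwalk
  set f : V → Sym2 V := fun v => s(v, (w v).getVert 1) with hf
  have hd : ∀ v : V, v ≠ r → G.dist ((w v).getVert 1) r = G.dist v r - 1 ∧
      G.Adj v ((w v).getVert 1) := by
    intro v hv
    have hpos : 0 < G.dist v r := h.pos_dist_of_ne hv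
    have hlen : 0 < (w v).length := by rw [hw]; exact hpos
    have hadj : G.Adj v ((w v).getVert 1) := by
      have := (w v).adj_getVert_succ (i := 0) hlen
      simpa using this
    constructor
    · have hnn : ¬ (w v).Nil := Walk.not_nil_iff_lt_length.2 hlen
      have htail := (w v).tail
      have hle : G.dist ((w v).getVert 1) r ≤ (w v).length - 1 := by
        have : G.dist ((w v).getVert 1) r ≤ (w v).tail.length := G.dist_le (w v).tail
        have hlt := Walk.length_tail_add_one hnn
        omega
      have hge : G.dist v r ≤ G.dist ((w v).getVert 1) r + 1 := by
        calc G.dist v r ≤ G.dist v ((w v).getVert 1) + G.dist ((w v).getVert 1) r :=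
              h.dist_triangle
        _ ≤ G.dist ((w v).getVert 1) r + 1 := by
              have : G.dist v ((w v).getVert 1) ≤ 1 :=
                le_of_eq (dist_eq_one_iff_adj.2 hadj)
              omega
      rw [hw] at hle
      omega
    · exact hadj
  have hinj : Set.InjOn f {v | v ≠ r} := by
    intro a ha b hb hab
    simp only [hf, Sym2.eq_iff] at hab
    rcases hab with ⟨h1, _⟩ | ⟨h1, h2⟩
    · exact h1
    · exfalso
      have da := (hd a ha).1
      have db := (hd b hb).1
      rw [h2] at da
      rw [← h1] at db
      have hpa : 0 < G.dist a r := h.pos_dist_of_ne ha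
      have hpb : 0 < G.dist b r := h.pos_dist_of_ne hb
      omega
  have hsub : f '' {v | v ≠ r} ⊆ G.edgeSet := by
    rintro e ⟨v, hv, rfl⟩
    exact (hd v hv).2
  have h1 : ({v : V | v ≠ r}).ncard ≤ G.edgeSet.ncard := by
    rw [← Set.ncard_image_of_injOn hinj]
    exact Set.ncard_le_ncard hsub G.edgeSet.toFinite
  have h2 : ({v : V | v ≠ r}).ncard = Fintype.card V - 1 := by
    have : {v : V | v ≠ r} = ({r} : Set V)ᶜ := by ext x; simp
    rw [this, Set.ncard_eq_toFinset_card', Set.toFinset_compl]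
    simp [Finset.card_compl]
  have : 0 < Fintype.card V := Fintype.card_pos_iff.2 ⟨r⟩
  omega

lemma ecp_choice {V : Type*} [Fintype V] [Nonempty V] (G : SimpleGraph V)
    {P : Set (Set (Sym2 V))} (hP : IsECPartition G P) :
    ∃ f : Set (Sym2 V) → Sym2 V, (∀ A ∈ P, f A ∈ A) ∧ Set.InjOn f P ∧
      f '' P ⊆ G.edgeSet ∧ P.Finite ∧ P.ncard ≤ G.edgeSet.ncard := by
  classical
  haveI : Nonempty (Sym2 V) := ⟨s(Classical.arbitrary V, Classical.arbitrary V)⟩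
  obtain ⟨hne, hdisj, hcover, _⟩ := hP
  set f : Set (Sym2 V) → Sym2 V :=
    fun A => if h : A.Nonempty then h.some else Classical.arbitrary _ with hfdef
  have hmem : ∀ A ∈ P, f A ∈ A := by
    intro A hA
    rw [hfdef]
    simp only
    rw [dif_pos (hne A hA)]
    exact (hne A hA).some_mem
  have hinj : Set.InjOn f P := by
    intro A hA B hB hAB
    by_contra hne'
    have hd := hdisj hA hB hne'
    have h1 := hmem A hA
    have h2 := hmem B hB
    rw [hAB] at h1
    exact (Set.disjoint_left.1 hd h1) h2
  have hsub : f '' P ⊆ G.edgeSet := by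
    rintro e ⟨A, hA, rfl⟩
    rw [← hcover]
    exact ⟨A, hA, hmem A hA⟩
  have hfin : P.Finite :=
    Set.Finite.of_finite_image (Set.Finite.subset G.edgeSet.toFinite hsub) hinj
  refine ⟨f, hmem, hinj, hsub, hfin, ?_⟩
  rw [← Set.ncard_image_of_injOn hinj]
  exact Set.ncard_le_ncard hsub G.edgeSet.toFinite

lemma pair_dom_of_ec {V : Type*} [Fintype V] [Nonempty V] (G : SimpleGraph V)
    (hpos : 0 < Fintype.card V)
    (hm : G.edgeSet.ncard = Fintype.card V)
    (hec : edgeCoalitionNumber G = Fintype.card V) :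
    ∀ e ∈ G.edgeSet, ∃ f, IsEdgeDominating G {e, f} := by
  classical
  set S := {k | ∃ P, IsECPartition G P ∧ P.ncard = k} with hS
  have hbdd : BddAbove S := by
    refine ⟨G.edgeSet.ncard, ?_⟩
    rintro k ⟨P, hP, rfl⟩
    exact (ecp_choice G hP).choose_spec.2.2.2.2
  have hSne : S.Nonempty := by
    by_contra hc
    rw [Set.not_nonempty_iff_eq_empty] at hc
    rw [edgeCoalitionNumber, ← hS, hc] at hec
    simp at hec
    omega
  have hmem : Fintype.card V ∈ S := hec ▸ Nat.sSup_mem hSne hbdd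
  obtain ⟨P, hP, hcard⟩ := hmem
  obtain ⟨f, hfmem, hinj, hsub, hfin, -⟩ := ecp_choice G hP
  -- image equals edgeSet
  have himg : f '' P = G.edgeSet := by
    refine Set.eq_of_subset_of_ncard_le hsub ?_ G.edgeSet.toFinite
    rw [Set.ncard_image_of_injOn hinj, hcard, hm]
  -- every part is a singleton
  have hsingle : ∀ A ∈ P, A = {f A} := by
    intro A hA
    ext x
    simp only [Set.mem_singleton_iff]
    constructor
    · intro hx
      have hxe : x ∈ G.edgeSet := by
        rw [← hP.2.2.1]; exact ⟨A, hA, hx⟩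
      rw [← himg] at hxe
      obtain ⟨B, hB, hBx⟩ := hxe
      have hAB : A = B := by
        by_contra hne'
        have := hP.2.1 hA hB hne'
        exact (Set.disjoint_left.1 this hx) (hBx ▸ hfmem B hB)
      rw [hAB, hBx]
    · rintro rfl; exact hfmem A hA
  intro e he
  have : e ∈ ⋃₀ P := by rw [hP.2.2.1]; exact he
  obtain ⟨A, hA, heA⟩ := this
  have hAe : A = {e} := by rw [hsingle A hA] at heA ⊢; simp at heA; rw [heA]
  rcases hP.2.2.2 A hA with ⟨-, hdom⟩ | ⟨-, B, hB, -, hco⟩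
  · exact ⟨e, by rw [Set.pair_eq_singleton]; rwa [hAe] at hdom⟩
  · refine ⟨f B, ?_⟩
    have hdom := hco.2.2.2
    rw [hsingle B hB] at hdom
    rwa [hAe, Set.singleton_union] at hdom

lemma forced_edge {V : Type*} (G : SimpleGraph V) (w : ℕ → V)
    (hW : ∀ i j, i ≤ 6 → j ≤ 6 → i ≠ j → w i ≠ w j)
    (hadj : ∀ i, i < 6 → G.Adj (w i) (w (i+1)))
    (hdom : ∃ f, IsEdgeDominating G {s(w 0, w 1), f}) :
    G.Adj (w 3) (w 5) := by
  have d01 : w 0 ≠ w 1 := hW 0 1 (by norm_num) (by norm_num) (by norm_num)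
  have d02 : w 0 ≠ w 2 := hW 0 2 (by norm_num) (by norm_num) (by norm_num)
  have d03 : w 0 ≠ w 3 := hW 0 3 (by norm_num) (by norm_num) (by norm_num)
  have d04 : w 0 ≠ w 4 := hW 0 4 (by norm_num) (by norm_num) (by norm_num)
  have d05 : w 0 ≠ w 5 := hW 0 5 (by norm_num) (by norm_num) (by norm_num)
  have d06 : w 0 ≠ w 6 := hW 0 6 (by norm_num) (by norm_num) (by norm_num)
  have d12 : w 1 ≠ w 2 := hW 1 2 (by norm_num) (by norm_num) (by norm_num)
  have d13 : w 1 ≠ w 3 := hW 1 3 (by norm_num) (by norm_num) (by norm_num)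
  have d14 : w 1 ≠ w 4 := hW 1 4 (by norm_num) (by norm_num) (by norm_num)
  have d15 : w 1 ≠ w 5 := hW 1 5 (by norm_num) (by norm_num) (by norm_num)
  have d16 : w 1 ≠ w 6 := hW 1 6 (by norm_num) (by norm_num) (by norm_num)
  have d23 : w 2 ≠ w 3 := hW 2 3 (by norm_num) (by norm_num) (by norm_num)
  have d24 : w 2 ≠ w 4 := hW 2 4 (by norm_num) (by norm_num) (by norm_num)
  have d25 : w 2 ≠ w 5 := hW 2 5 (by norm_num) (by norm_num) (by norm_num)
  have d26 : w 2 ≠ w 6 := hW 2 6 (by norm_num) (by norm_num) (by norm_num)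
  have d34 : w 3 ≠ w 4 := hW 3 4 (by norm_num) (by norm_num) (by norm_num)
  have d35 : w 3 ≠ w 5 := hW 3 5 (by norm_num) (by norm_num) (by norm_num)
  have d36 : w 3 ≠ w 6 := hW 3 6 (by norm_num) (by norm_num) (by norm_num)
  have d45 : w 4 ≠ w 5 := hW 4 5 (by norm_num) (by norm_num) (by norm_num)
  have d46 : w 4 ≠ w 6 := hW 4 6 (by norm_num) (by norm_num) (by norm_num)
  have d56 : w 5 ≠ w 6 := hW 5 6 (by norm_num) (by norm_num) (by norm_num)
  obtain ⟨f, hf⟩ := hdom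
  revert hf
  induction f using Sym2.ind with
  | _ x y =>
  intro hf
  obtain ⟨hsubD, hcov⟩ := hf
  have hxy : G.Adj x y := (G.mem_edgeSet).1 (hsubD (Set.mem_insert_of_mem _ rfl))
  have H : ∀ i, 2 ≤ i → i < 6 → (w i = x ∨ w i = y) ∨ (w (i+1) = x ∨ w (i+1) = y) := by
    intro i h2 h6
    have hgE : s(w i, w (i+1)) ∈ G.edgeSet := (G.mem_edgeSet).2 (hadj i h6)
    by_cases hg : s(w i, w (i+1)) ∈ ({s(w 0, w 1), s(x, y)} : Set (Sym2 V))
    · rcases hg with hg | hg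
      · exfalso
        rcases Sym2.eq_iff.1 hg with ⟨h1, -⟩ | ⟨h1, h1'⟩
        · exact hW i 0 (by omega) (by omega) (by omega) h1
        · exact hW i 1 (by omega) (by omega) (by omega) h1
      · simp only [Set.mem_singleton_iff] at hg
        rcases Sym2.eq_iff.1 hg with ⟨h1, h2⟩ | ⟨h1, h2⟩
        · exact Or.inl (Or.inl h1)
        · exact Or.inl (Or.inr h1)
    · obtain ⟨f', hf', v, hv1, hv2⟩ := hcov _ ⟨hgE, hg⟩
      rcases hf' with rfl | hf'
      · exfalso
        rcases Sym2.mem_iff.1 hv1 with rfl | rfl <;> rcases Sym2.mem_iff.1 hv2 with h | h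
        · exact hW i 0 (by omega) (by omega) (by omega) h
        · exact hW i 1 (by omega) (by omega) (by omega) h
        · exact hW (i+1) 0 (by omega) (by omega) (by omega) h
        · exact hW (i+1) 1 (by omega) (by omega) (by omega) h
      · simp only [Set.mem_singleton_iff] at hf'
        subst hf'
        rcases Sym2.mem_iff.1 hv1 with rfl | rfl
        · exact Or.inl (Sym2.mem_iff.1 hv2)
        · exact Or.inr (Sym2.mem_iff.1 hv2)
  have m2 := H 2 (by norm_num) (by norm_num)
  have m3 := H 3 (by norm_num) (by norm_num)
  have m4 := H 4 (by norm_num) (by norm_num)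
  have m5 := H 5 (by norm_num) (by norm_num)
  norm_num at m2 m3 m4 m5
  have h3 : w 3 = x ∨ w 3 = y := by
    by_contra hc
    push_neg at hc
    have e2 : w 2 = x ∨ w 2 = y :=
      m2.resolve_right (by rintro (h | h); exacts [hc.1 h, hc.2 h])
    have e4 : w 4 = x ∨ w 4 = y := by
      rcases m3 with (h | h) | h
      exacts [absurd h hc.1, absurd h hc.2, h]
    rcases e2 with h2 | h2 <;> rcases e4 with h4 | h4
    · exact d24 (h2.trans h4.symm)
    · rcases m5 with (h|h)|(h|h)
      · exact d25 (h2.trans h.symm)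
      · exact d45 (h4.trans h.symm)
      · exact d26 (h2.trans h.symm)
      · exact d46 (h4.trans h.symm)
    · rcases m5 with (h|h)|(h|h)
      · exact d45 (h4.trans h.symm)
      · exact d25 (h2.trans h.symm)
      · exact d46 (h4.trans h.symm)
      · exact d26 (h2.trans h.symm)
    · exact d24 (h2.trans h4.symm)
  have h5 : w 5 = x ∨ w 5 = y := by
    by_contra hc
    push_neg at hc
    have e6 : w 6 = x ∨ w 6 = y :=
      m5.resolve_left (by rintro (h | h); exacts [hc.1 h, hc.2 h])
    have e4 : w 4 = x ∨ w 4 = y :=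
      m4.resolve_right (by rintro (h | h); exacts [hc.1 h, hc.2 h])
    rcases e6 with h6 | h6 <;> rcases e4 with h4 | h4
    · exact d46 (h4.trans h6.symm)
    · rcases m2 with (h|h)|(h|h)
      · exact d26 (h.trans h6.symm)
      · exact d24 (h.trans h4.symm)
      · exact d36 (h.trans h6.symm)
      · exact d34 (h.trans h4.symm)
    · rcases m2 with (h|h)|(h|h)
      · exact d24 (h.trans h4.symm)
      · exact d26 (h.trans h6.symm)
      · exact d34 (h.trans h4.symm)
      · exact d36 (h.trans h6.symm)
    · exact d46 (h4.trans h6.symm)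
  rcases h3 with h3 | h3 <;> rcases h5 with h5 | h5
  · exact absurd (h3.trans h5.symm) d35
  · rw [← h3, ← h5] at hxy; exact hxy
  · rw [← h5, ← h3] at hxy; exact hxy.symm
  · exact absurd (h3.trans h5.symm) d35

lemma del_connected {V : Type*} (G : SimpleGraph V) (v1 v2 v3 v4 v5 : V)
    (hconn : G.Connected)
    (h12 : G.Adj v1 v2) (h23 : G.Adj v2 v3) (h34 : G.Adj v3 v4) (h45 : G.Adj v4 v5)
    (n13 : v1 ≠ v3) (n14 : v1 ≠ v4) (n15 : v1 ≠ v5)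
    (n23 : v2 ≠ v3) (n24 : v2 ≠ v4) (n25 : v2 ≠ v5)
    (n35 : v3 ≠ v5) (n45 : v4 ≠ v5) :
    (G.deleteEdges {s(v1,v3), s(v3,v5)}).Connected := by
  have hne : s(v1,v2) ≠ s(v1,v3) ∧ s(v1,v2) ≠ s(v3,v5) ∧ s(v2,v3) ≠ s(v1,v3) ∧ s(v2,v3) ≠ s(v3,v5)
      ∧ s(v3,v4) ≠ s(v1,v3) ∧ s(v3,v4) ≠ s(v3,v5) ∧ s(v4,v5) ≠ s(v1,v3) ∧ s(v4,v5) ≠ s(v3,v5) := by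
    refine ⟨?_, ?_, ?_, ?_, ?_, ?_, ?_, ?_⟩ <;>
      (intro h; rcases Sym2.eq_iff.1 h with ⟨h1, h2⟩ | ⟨h1, h2⟩ <;> simp_all)
  set s : Set (Sym2 V) := {s(v1,v3), s(v3,v5)} with hs
  set H := G.deleteEdges s with hH
  have step : ∀ a b : V, G.Adj a b → H.Reachable a b := by
    have r13 : H.Reachable v1 v3 := by
      have a1 : H.Adj v1 v2 := by
        rw [hH, deleteEdges_adj]
        exact ⟨h12, by simp [hs, hne.1, hne.2.1]⟩
      have a2 : H.Adj v2 v3 := by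
        rw [hH, deleteEdges_adj]
        exact ⟨h23, by simp [hs, hne.2.2.1, hne.2.2.2.1]⟩
      exact a1.reachable.trans a2.reachable
    have r35 : H.Reachable v3 v5 := by
      have a1 : H.Adj v3 v4 := by
        rw [hH, deleteEdges_adj]
        exact ⟨h34, by simp [hs, hne.2.2.2.2.1, hne.2.2.2.2.2.1]⟩
      have a2 : H.Adj v4 v5 := by
        rw [hH, deleteEdges_adj]
        exact ⟨h45, by simp [hs, hne.2.2.2.2.2.2.1, hne.2.2.2.2.2.2.2]⟩
      exact a1.reachable.trans a2.reachable
    intro a b hab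
    by_cases h1 : s(a, b) = s(v1, v3)
    · rcases Sym2.eq_iff.1 h1 with ⟨rfl, rfl⟩ | ⟨rfl, rfl⟩
      · exact r13
      · exact r13.symm
    by_cases h2 : s(a, b) = s(v3, v5)
    · rcases Sym2.eq_iff.1 h2 with ⟨rfl, rfl⟩ | ⟨rfl, rfl⟩
      · exact r35
      · exact r35.symm
    · exact Adj.reachable (by rw [hH, deleteEdges_adj]; exact ⟨hab, by simp [hs, h1, h2]⟩)
  haveI : Nonempty V := hconn.nonempty
  refine Connected.mk fun a b => ?_
  obtain ⟨wk⟩ := hconn.preconnected a b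
  induction wk with
  | nil => exact Reachable.refl _
  | cons h q ih => exact (step _ _ h).trans ih

/-- If `G` is a finite connected unicyclic simple graph of order `n` (so `G`
has exactly `n` edges) with `EC(G) = n`, then every path in `G` has length at
most 5. -/
theorem unicyclic_path_length_le_of_ec_eq_size {V : Type*} [Fintype V]
    (G : SimpleGraph V) (hconn : G.Connected)
    (hm : G.edgeSet.ncard = Fintype.card V)
    (hec : edgeCoalitionNumber G = Fintype.card V) :
    ∀ (u v : V) (p : G.Walk u v), p.IsPath → p.length ≤ 5 := by
  classical
  intro u v p hp
  by_contra hlen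
  push_neg at hlen
  have h6 : 6 ≤ p.length := hlen
  set W : ℕ → V := fun i => p.getVert i with hWdef
  have hW : ∀ i j, i ≤ 6 → j ≤ 6 → i ≠ j → W i ≠ W j := by
    intro i j hi hj hne h
    exact hne (getVert_inj_of_isPath p hp i j (hi.trans h6) (hj.trans h6) h)
  have hA : ∀ i, i < 6 → G.Adj (W i) (W (i+1)) :=
    fun i hi => p.adj_getVert_succ (lt_of_lt_of_le hi h6)
  haveI : Nonempty V := ⟨u⟩
  have hpos : 0 < Fintype.card V := Fintype.card_pos
  have hdom := pair_dom_of_ec G hpos hm hec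
  have e35 : G.Adj (W 3) (W 5) :=
    forced_edge G W hW hA (hdom _ ((G.mem_edgeSet).2 (hA 0 (by norm_num))))
  have hW' : ∀ i j, i ≤ 6 → j ≤ 6 → i ≠ j → W (6-i) ≠ W (6-j) :=
    fun i j hi hj hne => hW (6-i) (6-j) (by omega) (by omega) (by omega)
  have hA' : ∀ i, i < 6 → G.Adj (W (6-i)) (W (6-(i+1))) := by
    intro i hi
    have h := hA (5-i) (by omega)
    have h1 : 5-i+1 = 6-i := by omega
    have h2 : 5-i = 6-(i+1) := by omega
    rw [h1] at h
    rw [h2] at h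
    exact h.symm
  have e13' : G.Adj (W (6-3)) (W (6-5)) :=
    forced_edge G (fun i => W (6-i)) hW' hA'
      (hdom _ ((G.mem_edgeSet).2 (hA' 0 (by norm_num))))
  have e13 : G.Adj (W 1) (W 3) := by
    norm_num at e13'
    exact e13'.symm
  set H := G.deleteEdges {s(W 1, W 3), s(W 3, W 5)} with hHdef
  have hHconn : H.Connected :=
    del_connected G (W 1) (W 2) (W 3) (W 4) (W 5) hconn
      (hA 1 (by norm_num)) (hA 2 (by norm_num)) (hA 3 (by norm_num)) (hA 4 (by norm_num))
      (hW 1 3 (by norm_num) (by norm_num) (by norm_num))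
      (hW 1 4 (by norm_num) (by norm_num) (by norm_num))
      (hW 1 5 (by norm_num) (by norm_num) (by norm_num))
      (hW 2 3 (by norm_num) (by norm_num) (by norm_num))
      (hW 2 4 (by norm_num) (by norm_num) (by norm_num))
      (hW 2 5 (by norm_num) (by norm_num) (by norm_num))
      (hW 3 5 (by norm_num) (by norm_num) (by norm_num))
      (hW 4 5 (by norm_num) (by norm_num) (by norm_num))
  have hEs : H.edgeSet = G.edgeSet \ {s(W 1, W 3), s(W 3, W 5)} :=
    G.edgeSet_deleteEdges _
  have hsubE : ({s(W 1, W 3), s(W 3, W 5)} : Set (Sym2 V)) ⊆ G.edgeSet := by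
    intro e he
    rcases he with rfl | he
    · exact e13
    · rw [Set.mem_singleton_iff] at he
      subst he
      exact e35
  have hne2 : s(W 1, W 3) ≠ s(W 3, W 5) := by
    intro h
    rcases Sym2.eq_iff.1 h with ⟨h1, h2⟩ | ⟨h1, h2⟩
    · exact hW 1 3 (by norm_num) (by norm_num) (by norm_num) h1
    · exact hW 1 5 (by norm_num) (by norm_num) (by norm_num) h1
  have hnc : H.edgeSet.ncard = G.edgeSet.ncard - 2 := by
    rw [hEs, Set.ncard_diff hsubE, Set.ncard_pair hne2]
  have hge7 : 7 ≤ Fintype.card V := by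
    have hinj : Function.Injective (fun i : Fin 7 => W i) := by
      intro a b hab
      by_contra hne
      exact hW a b (by omega) (by omega) (fun hh => hne (Fin.ext hh)) hab
    calc 7 = Fintype.card (Fin 7) := (Fintype.card_fin 7).symm
    _ ≤ Fintype.card V := Fintype.card_le_of_injective _ hinj
  have hfin := conn_card_le H hHconn
  rw [hnc, hm] at hfin
  omega
end

section
/- If G is a finite connected simple graph with m edges such that EC(G) = m (equivalently, the singleton partition of the edge set of G is an ec-partition), then every path in G has length at most 6. -/
open SimpleGraph

section aux
lemma aux_getVert_mem_support {V : Type*} {G : SimpleGraph V} {u v : V}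
    (p : G.Walk u v) (i : ℕ) : p.getVert i ∈ p.support := by
  induction p generalizing i with
  | nil => simp [SimpleGraph.Walk.getVert]
  | cons h q ih =>
    cases i with
    | zero => simp [SimpleGraph.Walk.getVert]
    | succ n =>
      rw [SimpleGraph.Walk.getVert_cons_succ, SimpleGraph.Walk.support_cons]
      exact List.mem_cons_of_mem _ (ih n)

lemma aux_getVert_inj {V : Type*} {G : SimpleGraph V} {u v : V}
    {p : G.Walk u v} (hp : p.IsPath) :
    ∀ i j, i ≤ p.length → j ≤ p.length → p.getVert i = p.getVert j → i = j := by
  induction p with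
  | nil => intro i j hi hj _; simp at hi hj; omega
  | cons h q ih =>
    rw [SimpleGraph.Walk.cons_isPath_iff] at hp
    intro i j hi hj hEq
    match i, j with
    | 0, 0 => rfl
    | 0, j + 1 =>
      rw [SimpleGraph.Walk.getVert_cons_succ, SimpleGraph.Walk.getVert_zero] at hEq
      have := aux_getVert_mem_support q j
      rw [← hEq] at this
      exact absurd this hp.2
    | i + 1, 0 =>
      rw [SimpleGraph.Walk.getVert_cons_succ, SimpleGraph.Walk.getVert_zero] at hEq
      have := aux_getVert_mem_support q i
      rw [hEq] at this
      exact absurd this hp.2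
    | i + 1, j + 1 =>
      rw [SimpleGraph.Walk.getVert_cons_succ, SimpleGraph.Walk.getVert_cons_succ] at hEq
      simp only [SimpleGraph.Walk.length_cons] at hi hj
      exact congrArg Nat.succ (ih hp.1 i j (by omega) (by omega) hEq)

lemma aux_sym2_not_three {α : Type*} {g : Sym2 α} {a b c : α}
    (ha : a ∈ g) (hb : b ∈ g) (hc : c ∈ g)
    (hab : a ≠ b) (hac : a ≠ c) (hbc : b ≠ c) : False := by
  induction g using Sym2.ind with
  | _ x y =>
    rw [Sym2.mem_iff] at ha hb hc
    rcases ha with rfl | rfl <;> rcases hb with rfl | rfl <;> rcases hc with rfl | rfl <;>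
      simp_all

lemma aux_ncard_le {α : Type*} {P : Set (Set α)} {S : Set α}
    (hSfin : S.Finite)
    (hne : ∀ A ∈ P, A.Nonempty) (hdisj : P.Pairwise Disjoint)
    (hU : ⋃₀ P ⊆ S) : P.ncard ≤ S.ncard := by
  classical
  rcases P.eq_empty_or_nonempty with rfl | ⟨A0, hA0⟩
  · simp
  have : Nonempty α := ⟨(hne A0 hA0).some⟩
  set f : Set α → α := fun A => if h : A.Nonempty then h.some else Classical.arbitrary α with hf_def
  have hf : ∀ A ∈ P, f A ∈ A := by
    intro A hA
    simp only [hf_def, dif_pos (hne A hA)]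
    exact (hne A hA).some_mem
  have hinj : Set.InjOn f P := by
    intro A hA B hB hEq
    by_contra hne'
    exact Set.disjoint_left.mp (hdisj hA hB hne') (hf A hA) (hEq ▸ hf B hB)
  calc P.ncard = (f '' P).ncard := (Set.ncard_image_of_injOn hinj).symm
    _ ≤ S.ncard := Set.ncard_le_ncard
        (by rintro _ ⟨A, hA, rfl⟩; exact hU ⟨A, hA, hf A hA⟩) hSfin

lemma aux_singleton {α : Type*} {P : Set (Set α)} {S : Set α}
    (hSfin : S.Finite)
    (hne : ∀ A ∈ P, A.Nonempty) (hdisj : P.Pairwise Disjoint)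
    (hU : ⋃₀ P = S) (hcard : P.ncard = S.ncard)
    {A : Set α} (hA : A ∈ P) {x y : α} (hx : x ∈ A) (hy : y ∈ A) : x = y := by
  classical
  by_contra hxy
  have : Nonempty α := ⟨x⟩
  set f : Set α → α := fun B => if h : (B \ {y}).Nonempty then h.some else Classical.arbitrary α
    with hf_def
  have hf : ∀ B ∈ P, f B ∈ B \ {y} := by
    intro B hB
    have hBne : (B \ {y}).Nonempty := by
      by_cases hBA : B = A
      · exact ⟨x, by simp [hBA, hx, hxy]⟩
      · obtain ⟨z, hz⟩ := hne B hB
        refine ⟨z, hz, ?_⟩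
        simp only [Set.mem_singleton_iff]
        rintro rfl
        exact Set.disjoint_left.mp (hdisj hB hA hBA) hz hy
    simp only [hf_def, dif_pos hBne]
    exact hBne.some_mem
  have hinj : Set.InjOn f P := by
    intro B hB C hC hEq
    by_contra hne'
    exact Set.disjoint_left.mp (hdisj hB hC hne') (hf B hB).1 (hEq ▸ (hf C hC).1)
  have hyS : y ∈ S := hU ▸ ⟨A, hA, hy⟩
  have hlt : P.ncard < S.ncard := by
    calc P.ncard = (f '' P).ncard := (Set.ncard_image_of_injOn hinj).symm
      _ ≤ (S \ {y}).ncard := Set.ncard_le_ncard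
          (by rintro _ ⟨B, hB, rfl⟩
              exact ⟨hU ▸ ⟨B, hB, (hf B hB).1⟩, (hf B hB).2⟩)
          hSfin.diff
      _ < S.ncard := Set.ncard_diff_singleton_lt_of_mem hyS hSfin
  omega
end aux

/-- If `G` is a finite connected simple graph with `m` edges and `EC(G) = m`,
then every path in `G` has length at most 6. -/

theorem path_length_le_of_ec_eq_size {V : Type*} [Fintype V] (G : SimpleGraph V)
    (hconn : G.Connected)
    (hec : edgeCoalitionNumber G = G.edgeSet.ncard) :
    ∀ (u v : V) (p : G.Walk u v), p.IsPath → p.length ≤ 6 := by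
  intro u v p hp
  by_contra hlen
  push_neg at hlen
  have hEfin : G.edgeSet.Finite := Set.toFinite _
  set w : ℕ → V := p.getVert with hw
  set a : ℕ → Sym2 V := fun i => s(w i, w (i + 1)) with ha
  have hwne : ∀ i j : ℕ, i ≤ 7 → j ≤ 7 → p.getVert i = p.getVert j → i = j :=
    fun i j hi hj h => aux_getVert_inj hp i j (by omega) (by omega) h
  have haE : ∀ i : ℕ, i ≤ 6 → a i ∈ G.edgeSet :=
    fun i hi => p.adj_getVert_succ (by omega)
  have haa : ∀ i j : ℕ, i ≤ 6 → j ≤ 6 → a i = a j → i = j := by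
    intro i j hi hj h
    simp only [ha, Sym2.eq_iff] at h
    rcases h with ⟨h1, h2⟩ | ⟨h1, h2⟩
    · exact hwne i j (by omega) (by omega) h1
    · have e1 := hwne i (j + 1) (by omega) (by omega) h1
      have e2 := hwne (i + 1) j (by omega) (by omega) h2
      omega
  have hnoshare : ∀ i j : ℕ, i ≤ 6 → j + 2 ≤ i → ¬ SharesEndpoint (a i) (a j) := by
    rintro i j hi hj ⟨x, hxi, hxj⟩
    simp only [ha, Sym2.mem_iff] at hxi hxj
    rcases hxi with rfl | rfl <;> rcases hxj with h | h <;>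
      exact absurd (hwne _ _ (by omega) (by omega) h) (by omega)
  -- extract an ec-partition with maximal number of parts
  have hmpos : 0 < G.edgeSet.ncard :=
    (Set.ncard_pos hEfin).mpr ⟨a 0, haE 0 (by omega)⟩
  have hbdd : BddAbove {k | ∃ P, IsECPartition G P ∧ P.ncard = k} := by
    refine ⟨G.edgeSet.ncard, ?_⟩
    rintro k ⟨P, ⟨h1, h2, h3, _⟩, rfl⟩
    exact aux_ncard_le hEfin h1 h2 h3.le
  have hKne : {k | ∃ P, IsECPartition G P ∧ P.ncard = k}.Nonempty := by
    by_contra h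
    rw [Set.not_nonempty_iff_eq_empty] at h
    rw [edgeCoalitionNumber, h] at hec
    simp at hec
    omega
  have hmem : G.edgeSet.ncard ∈ {k | ∃ P, IsECPartition G P ∧ P.ncard = k} := by
    have := Nat.sSup_mem hKne hbdd
    rwa [show sSup {k | ∃ P, IsECPartition G P ∧ P.ncard = k} = edgeCoalitionNumber G from rfl,
      hec] at this
  obtain ⟨P, ⟨hPne, hPdisj, hPU, hPcond⟩, hPcard⟩ := hmem
  have hsingle : ∀ A ∈ P, ∀ x ∈ A, ∀ y ∈ A, x = y :=
    fun A hA x hx y hy => aux_singleton hEfin hPne hPdisj hPU hPcard hA hx hy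
  obtain ⟨A, hA, ha0A⟩ : a 0 ∈ ⋃₀ P := hPU ▸ haE 0 (by omega)
  have hAeq : A = {a 0} :=
    Set.eq_singleton_iff_unique_mem.mpr ⟨ha0A, fun y hy => hsingle A hA y hy _ ha0A⟩
  rcases hPcond A hA with ⟨-, hdom⟩ | ⟨-, B, hB, hBA, -, -, -, hdom⟩
  · -- {a 0} is edge dominating: contradiction with a 3
    obtain ⟨f, hf, hsh⟩ := hdom.2 (a 3) ⟨haE 3 (by omega), by
      rw [hAeq, Set.mem_singleton_iff]
      intro h
      exact absurd (haa 3 0 (by omega) (by omega) h) (by omega)⟩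
    rw [hAeq, Set.mem_singleton_iff] at hf
    exact hnoshare 3 0 (by omega) (by omega) (hf ▸ hsh)
  · -- A forms a coalition with B = {g}
    obtain ⟨g, hgB⟩ := hPne B hB
    have hBeq : B = {g} :=
      Set.eq_singleton_iff_unique_mem.mpr ⟨hgB, fun y hy => hsingle B hB y hy _ hgB⟩
    have key : ∀ i : ℕ, 2 ≤ i → i ≤ 6 → ∃ x, x ∈ a i ∧ x ∈ g := by
      intro i hi2 hi6
      by_cases hig : a i = g
      · exact ⟨w i, by simp [ha], by rw [← hig]; simp [ha]⟩
      · obtain ⟨f, hf, hsh⟩ := hdom.2 (a i) ⟨haE i hi6, by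
          rw [hAeq, hBeq]
          simp only [Set.mem_union, Set.mem_singleton_iff]
          rintro (h | h)
          · exact absurd (haa i 0 (by omega) (by omega) h) (by omega)
          · exact hig h⟩
        rw [hAeq, hBeq] at hf
        rcases hf with hf | hf
        · rw [Set.mem_singleton_iff] at hf
          exact absurd (hf ▸ hsh) (hnoshare i 0 (by omega) (by omega))
        · rw [Set.mem_singleton_iff] at hf
          exact hf ▸ hsh
    obtain ⟨x2, hx2a, hx2g⟩ := key 2 (by omega) (by omega)
    obtain ⟨x4, hx4a, hx4g⟩ := key 4 (by omega) (by omega)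
    obtain ⟨x6, hx6a, hx6g⟩ := key 6 (by omega) (by omega)
    simp only [ha, Sym2.mem_iff] at hx2a hx4a hx6a
    rcases hx2a with rfl | rfl <;> rcases hx4a with rfl | rfl <;> rcases hx6a with rfl | rfl <;>
      exact aux_sym2_not_three hx2g hx4g hx6g
        (fun h => absurd (hwne _ _ (by omega) (by omega) h) (by omega))
        (fun h => absurd (hwne _ _ (by omega) (by omega) h) (by omega))
        (fun h => absurd (hwne _ _ (by omega) (by omega) h) (by omega))
end
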